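/- Let Λ ⊂ ℝⁿ be a lattice of rank m with a basis λ₁,…,λ_m satisfying |λ₁|·…·|λ_m| ≤ C·det(Λ), ordered by increasing norm, and suppose the ball of radius T in span(Λ) contains m linearly independent vectors of Λ. Then #{v ∈ Λ : |v| ≤ T} = v_m·T^m/det(Λ) + O(T^{m−1}/(|λ₁|·…·|λ_{m−1}|)), where v_m is the volume of the m-dimensional unit ball and the implied constant depends only on m and C. -/

import Mathlib

/-- Euclidean norm of a real vector. -/
noncomputable def vnormR {n : ℕ} (v : Fin n → ℝ) : ℝ := Real.sqrt (∑ i, v i ^ 2)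

/-- Volume of the m-dimensional unit ball. -/
noncomputable def unitBallVol (m : ℕ) : ℝ :=
  (MeasureTheory.volume (Metric.ball (0 : EuclideanSpace ℝ (Fin m)) 1)).toReal

/-- Gram determinant of a family of real vectors; its square root is the covolume of
the lattice they generate. -/
noncomputable def gramDetR {n m : ℕ} (lam : Fin m → (Fin n → ℝ)) : ℝ :=
  (Matrix.of fun i j : Fin m => ∑ k, lam i k * lam j k).det



open MeasureTheory

lemma vnormR_eq_norm {n : ℕ} (v : Fin n → ℝ) :
    vnormR v = ‖(WithLp.linearEquiv 2 ℝ (Fin n → ℝ)).symm v‖ := by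
  rw [EuclideanSpace.norm_eq]
  simp [vnormR, sq_abs]

lemma vnormR_nonneg {n : ℕ} (v : Fin n → ℝ) : 0 ≤ vnormR v := Real.sqrt_nonneg _

lemma vnormR_add_le {n : ℕ} (v w : Fin n → ℝ) : vnormR (v + w) ≤ vnormR v + vnormR w := by
  simp only [vnormR_eq_norm, map_add]; exact norm_add_le _ _

lemma vnormR_smul {n : ℕ} (c : ℝ) (v : Fin n → ℝ) : vnormR (c • v) = |c| * vnormR v := by
  simp only [vnormR_eq_norm, _root_.map_smul, norm_smul, Real.norm_eq_abs]

lemma vnormR_eq_zero {n : ℕ} {v : Fin n → ℝ} : vnormR v = 0 ↔ v = 0 := by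
  simp only [vnormR_eq_norm, norm_eq_zero, EmbeddingLike.map_eq_zero_iff]

lemma vnormR_sum_le {n : ℕ} {ι : Type*} (s : Finset ι) (f : ι → (Fin n → ℝ)) :
    vnormR (∑ i ∈ s, f i) ≤ ∑ i ∈ s, vnormR (f i) := by
  simp only [vnormR_eq_norm, map_sum]; exact norm_sum_le _ _



/-- volume of {y | vnormR y ≤ r} in pi space -/
lemma volume_vnormR_le (m : ℕ) {r : ℝ} (hr : 0 ≤ r) :
    volume {y : Fin m → ℝ | vnormR y ≤ r} =
      ENNReal.ofReal (r ^ m) * volume (Metric.ball (0 : EuclideanSpace ℝ (Fin m)) 1) := by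
  have hmp : MeasurePreserving ((MeasurableEquiv.toLp 2 (Fin m → ℝ)).symm) volume volume :=
    EuclideanSpace.volume_preserving_symm_measurableEquiv_toLp (Fin m)
  have hms : MeasurableSet {y : Fin m → ℝ | vnormR y ≤ r} := by
    have : Continuous fun y : Fin m → ℝ => vnormR y := by
      unfold vnormR
      exact (continuous_finset_sum _ fun i _ => (continuous_apply i).pow 2).sqrt
    exact measurableSet_le this.measurable measurable_const
  have h1 : ((MeasurableEquiv.toLp 2 (Fin m → ℝ)).symm) ⁻¹' {y : Fin m → ℝ | vnormR y ≤ r} =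
      Metric.closedBall (0 : EuclideanSpace ℝ (Fin m)) r := by
    ext x
    simp only [Set.mem_preimage, Set.mem_setOf_eq, Metric.mem_closedBall, dist_zero_right]
    have : vnormR ((MeasurableEquiv.toLp 2 (Fin m → ℝ)).symm x) = ‖x‖ := by
      rw [EuclideanSpace.norm_eq]
      simp [vnormR, sq_abs]
    rw [this]
  rw [← hmp.measure_preimage hms.nullMeasurableSet, h1,
    Measure.addHaar_closedBall _ _ hr, finrank_euclideanSpace_fin]

/-- the unit cube translated by an integer vector -/
def icube {m : ℕ} (a : Fin m → ℤ) : Set (Fin m → ℝ) :=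
  Set.pi Set.univ fun i => Set.Ico (a i : ℝ) (a i + 1)

lemma measurableSet_icube {m : ℕ} (a : Fin m → ℤ) : MeasurableSet (icube a) :=
  MeasurableSet.univ_pi fun _ => measurableSet_Ico

lemma volume_icube {m : ℕ} (a : Fin m → ℤ) : volume (icube a) = 1 := by
  rw [icube, volume_pi_pi]
  simp

lemma mem_icube_iff {m : ℕ} (a : Fin m → ℤ) (x : Fin m → ℝ) :
    x ∈ icube a ↔ ∀ i, ⌊x i⌋ = a i := by
  constructor
  · intro hx i
    have := hx i (Set.mem_univ i)
    rw [Int.floor_eq_iff]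
    · exact ⟨this.1, this.2⟩
  · intro h i _
    constructor
    · rw [← h i]; exact Int.floor_le _
    · rw [← h i]; exact Int.lt_floor_add_one _

lemma icube_disjoint {m : ℕ} {a b : Fin m → ℤ} (hab : a ≠ b) :
    Disjoint (icube a) (icube b) := by
  rw [Set.disjoint_left]
  intro x hxa hxb
  exact hab (funext fun i => by rw [← (mem_icube_iff a x).1 hxa i, (mem_icube_iff b x).1 hxb i])

lemma volume_biUnion_icube {m : ℕ} (A : Finset (Fin m → ℤ)) :
    volume (⋃ a ∈ A, icube a) = A.card := by
  rw [measure_biUnion_finset ?_ fun a _ => measurableSet_icube a]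
  · simp [volume_icube]
  · intro a _ b _ hab
    exact icube_disjoint hab
/-- lattice points (in coordinates) of norm ≤ T -/
def latPts (m : ℕ) (S : Matrix (Fin m) (Fin m) ℝ) (T : ℝ) : Set (Fin m → ℤ) :=
  {a | vnormR (S.mulVec fun i => (a i : ℝ)) ≤ T}

lemma mulVec_eq_sum_cols {m : ℕ} (S : Matrix (Fin m) (Fin m) ℝ) (c : Fin m → ℝ) :
    S.mulVec c = ∑ i, c i • (fun j => S j i) := by
  funext j
  simp only [Matrix.mulVec, dotProduct, Finset.sum_apply, Pi.smul_apply, smul_eq_mul]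
  exact Finset.sum_congr rfl fun i _ => mul_comm _ _

lemma vnormR_mulVec_le {m : ℕ} (S : Matrix (Fin m) (Fin m) ℝ) (c : Fin m → ℝ)
    (hc : ∀ i, |c i| ≤ 1) :
    vnormR (S.mulVec c) ≤ ∑ i, vnormR (fun j => S j i) := by
  rw [mulVec_eq_sum_cols]
  refine le_trans (vnormR_sum_le _ _) (Finset.sum_le_sum fun i _ => ?_)
  rw [vnormR_smul]
  nlinarith [vnormR_nonneg (fun j => S j i), hc i, abs_nonneg (c i)]

lemma volume_W {m : ℕ} (S : Matrix (Fin m) (Fin m) ℝ) (hS : S.det ≠ 0) {r : ℝ} (hr : 0 ≤ r) :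
    volume {x : Fin m → ℝ | vnormR (S.mulVec x) ≤ r} =
      ENNReal.ofReal |S.det⁻¹| *
        (ENNReal.ofReal (r ^ m) * volume (Metric.ball (0 : EuclideanSpace ℝ (Fin m)) 1)) := by
  have h1 : {x : Fin m → ℝ | vnormR (S.mulVec x) ≤ r} =
      (Matrix.toLin' S) ⁻¹' {y : Fin m → ℝ | vnormR y ≤ r} := by
    ext x; simp [Matrix.toLin'_apply]
  have hdet : LinearMap.det (Matrix.toLin' S) ≠ 0 := by
    rwa [LinearMap.det_toLin']
  rw [h1, Measure.addHaar_preimage_linearMap volume hdet, volume_vnormR_le m hr,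
    LinearMap.det_toLin']

lemma biUnion_subset_W {m : ℕ} (S : Matrix (Fin m) (Fin m) ℝ) (T : ℝ) (A : Finset (Fin m → ℤ))
    (hA : ↑A ⊆ latPts m S T) :
    (⋃ a ∈ A, icube a) ⊆
      {x : Fin m → ℝ | vnormR (S.mulVec x) ≤ T + ∑ i, vnormR (fun j => S j i)} := by
  intro x hx
  simp only [Set.mem_iUnion, exists_prop] at hx
  obtain ⟨a, haA, hxa⟩ := hx
  have ha : vnormR (S.mulVec fun i => (a i : ℝ)) ≤ T := hA haA
  have hxd : x = (fun i => (a i : ℝ)) + (x - fun i => (a i : ℝ)) := by ring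
  have : S.mulVec x = S.mulVec (fun i => (a i : ℝ)) + S.mulVec (x - fun i => (a i : ℝ)) := by
    rw [← Matrix.mulVec_add, ← hxd]
  simp only [Set.mem_setOf_eq, this]
  refine le_trans (vnormR_add_le _ _) (add_le_add ha (vnormR_mulVec_le _ _ fun i => ?_))
  have h := hxa i (Set.mem_univ i)
  obtain ⟨h1, h2⟩ := h
  simp only [Pi.sub_apply]
  rw [abs_le]
  constructor <;> linarith

lemma W_subset_biUnion {m : ℕ} (S : Matrix (Fin m) (Fin m) ℝ) (T : ℝ) :
    {x : Fin m → ℝ | vnormR (S.mulVec x) ≤ T - ∑ i, vnormR (fun j => S j i)} ⊆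
      ⋃ a ∈ latPts m S T, icube a := by
  intro x hx
  simp only [Set.mem_setOf_eq] at hx
  set a : Fin m → ℤ := fun i => ⌊x i⌋ with ha
  have hxa : x ∈ icube a := (mem_icube_iff a x).2 fun i => rfl
  have haP : a ∈ latPts m S T := by
    have hd : (fun i => (a i : ℝ)) = x + ((fun i => (a i : ℝ)) - x) := by ring
    have : S.mulVec (fun i => (a i : ℝ)) = S.mulVec x + S.mulVec ((fun i => (a i : ℝ)) - x) := by
      rw [← Matrix.mulVec_add, ← hd]
    simp only [latPts, Set.mem_setOf_eq, this]
    have hb : vnormR (S.mulVec ((fun i => (a i : ℝ)) - x)) ≤ ∑ i, vnormR (fun j => S j i) := by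
      refine vnormR_mulVec_le _ _ fun i => ?_
      simp only [Pi.sub_apply, ha]
      have h1 := Int.floor_le (x i)
      have h2 := Int.lt_floor_add_one (x i)
      rw [abs_le]
      constructor <;> linarith
    have ht := vnormR_add_le (S.mulVec x) (S.mulVec ((fun i => (a i : ℝ)) - x))
    linarith
  exact Set.mem_biUnion haP hxa

lemma unitBallVol_pos (m : ℕ) : 0 < unitBallVol m := by
  rw [unitBallVol]
  rw [ENNReal.toReal_pos_iff]
  exact ⟨Metric.measure_ball_pos volume _ one_pos, measure_ball_lt_top⟩

lemma core_upper_finset {m : ℕ} (S : Matrix (Fin m) (Fin m) ℝ) (hS : S.det ≠ 0) {T : ℝ}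
    (hT : 0 ≤ T) (A : Finset (Fin m → ℤ)) (hA : ↑A ⊆ latPts m S T) :
    (A.card : ℝ) ≤ |S.det⁻¹| * ((T + ∑ i, vnormR (fun j => S j i)) ^ m * unitBallVol m) := by
  set D := ∑ i, vnormR (fun j => S j i) with hD
  have hD0 : 0 ≤ D := Finset.sum_nonneg fun i _ => vnormR_nonneg _
  have hTD : 0 ≤ T + D := by linarith
  have h1 : (A.card : ENNReal) ≤ ENNReal.ofReal |S.det⁻¹| *
      (ENNReal.ofReal ((T + D) ^ m) * volume (Metric.ball (0 : EuclideanSpace ℝ (Fin m)) 1)) := by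
    rw [← volume_biUnion_icube A, ← volume_W S hS hTD]
    exact measure_mono (biUnion_subset_W S T A hA)
  have hne : ENNReal.ofReal |S.det⁻¹| *
      (ENNReal.ofReal ((T + D) ^ m) * volume (Metric.ball (0 : EuclideanSpace ℝ (Fin m)) 1)) ≠ ⊤ :=
    ENNReal.mul_ne_top ENNReal.ofReal_ne_top
      (ENNReal.mul_ne_top ENNReal.ofReal_ne_top measure_ball_lt_top.ne)
  have := ENNReal.toReal_mono hne h1
  rwa [ENNReal.toReal_natCast, ENNReal.toReal_mul, ENNReal.toReal_mul,
    ENNReal.toReal_ofReal (abs_nonneg _), ENNReal.toReal_ofReal (pow_nonneg hTD m),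
    ← unitBallVol] at this

lemma core_finite {m : ℕ} (S : Matrix (Fin m) (Fin m) ℝ) (hS : S.det ≠ 0) {T : ℝ} (hT : 0 ≤ T) :
    (latPts m S T).Finite := by
  by_contra h
  have h : (latPts m S T).Infinite := h
  set Bd := |S.det⁻¹| * ((T + ∑ i, vnormR (fun j => S j i)) ^ m * unitBallVol m) with hBd
  obtain ⟨t, hts, htc⟩ := h.exists_subset_card_eq (⌈Bd⌉₊ + 1)
  have h2 := core_upper_finset S hS hT t hts
  rw [htc] at h2
  have h3 := Nat.le_ceil Bd
  push_cast at h2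
  linarith

lemma core_upper {m : ℕ} (S : Matrix (Fin m) (Fin m) ℝ) (hS : S.det ≠ 0) {T : ℝ} (hT : 0 ≤ T) :
    ((latPts m S T).ncard : ℝ) * |S.det| ≤
      unitBallVol m * (T + ∑ i, vnormR (fun j => S j i)) ^ m := by
  have hfin := core_finite S hS hT
  have h1 := core_upper_finset S hS hT hfin.toFinset (by simp)
  rw [Set.ncard_eq_toFinset_card (latPts m S T) hfin]
  have hdet : 0 < |S.det| := abs_pos.2 hS
  have hinv : |S.det⁻¹| * |S.det| = 1 := by
    rw [abs_inv]; exact inv_mul_cancel₀ hdet.ne'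
  have h2 := mul_le_mul_of_nonneg_right h1 hdet.le
  have h3 : |S.det⁻¹| * ((T + ∑ i, vnormR (fun j => S j i)) ^ m * unitBallVol m) * |S.det| =
      unitBallVol m * (T + ∑ i, vnormR (fun j => S j i)) ^ m := by
    linear_combination ((T + ∑ i, vnormR (fun j => S j i)) ^ m * unitBallVol m) * hinv
  linarith

lemma core_lower {m : ℕ} (S : Matrix (Fin m) (Fin m) ℝ) (hS : S.det ≠ 0) {T : ℝ} (hT : 0 ≤ T)
    (hDT : ∑ i, vnormR (fun j => S j i) ≤ T) :
    unitBallVol m * (T - ∑ i, vnormR (fun j => S j i)) ^ m ≤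
      ((latPts m S T).ncard : ℝ) * |S.det| := by
  set D := ∑ i, vnormR (fun j => S j i) with hD
  have hfin := core_finite S hS hT
  have hTD : 0 ≤ T - D := by linarith
  have h1 : ENNReal.ofReal |S.det⁻¹| *
      (ENNReal.ofReal ((T - D) ^ m) * volume (Metric.ball (0 : EuclideanSpace ℝ (Fin m)) 1)) ≤
      (hfin.toFinset.card : ENNReal) := by
    rw [← volume_biUnion_icube hfin.toFinset, ← volume_W S hS hTD]
    refine measure_mono (le_trans (W_subset_biUnion S T) ?_)
    intro x hx
    simp only [Set.mem_iUnion, exists_prop] at hx ⊢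
    obtain ⟨a, haP, hxa⟩ := hx
    exact ⟨a, by simpa using haP, hxa⟩
  have := ENNReal.toReal_mono (by simp) h1
  rw [ENNReal.toReal_natCast, ENNReal.toReal_mul, ENNReal.toReal_mul,
    ENNReal.toReal_ofReal (abs_nonneg _), ENNReal.toReal_ofReal (pow_nonneg hTD m),
    ← unitBallVol] at this
  rw [Set.ncard_eq_toFinset_card (latPts m S T) hfin]
  have hdet : 0 < |S.det| := abs_pos.2 hS
  have hinv : |S.det⁻¹| * |S.det| = 1 := by
    rw [abs_inv]; exact inv_mul_cancel₀ hdet.ne'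
  have h2 := mul_le_mul_of_nonneg_right this hdet.le
  have h3 : |S.det⁻¹| * ((T - D) ^ m * unitBallVol m) * |S.det| =
      unitBallVol m * (T - D) ^ m := by
    linear_combination ((T - D) ^ m * unitBallVol m) * hinv
  linarith

section Gram
open Matrix
open scoped MatrixOrder


variable {n m : ℕ} (lam : Fin m → (Fin n → ℝ))

def gramM : Matrix (Fin m) (Fin m) ℝ := Matrix.of fun i j : Fin m => ∑ k, lam i k * lam j k

lemma quad_eq (x : Fin m → ℝ) :
    x ⬝ᵥ ((gramM lam).mulVec x) = ∑ k, (∑ i, x i * lam i k) ^ 2 := by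
  calc x ⬝ᵥ ((gramM lam).mulVec x)
      = ∑ i, ∑ j, ∑ k, (x i * lam i k) * (x j * lam j k) := by
        simp only [dotProduct, Matrix.mulVec, gramM, Matrix.of_apply, Finset.mul_sum,
          Finset.sum_mul]
        refine Finset.sum_congr rfl fun i _ => Finset.sum_congr rfl fun j _ =>
          Finset.sum_congr rfl fun k _ => by ring
    _ = ∑ i, ∑ k, ∑ j, (x i * lam i k) * (x j * lam j k) :=
        Finset.sum_congr rfl fun i _ => Finset.sum_comm
    _ = ∑ k, ∑ i, ∑ j, (x i * lam i k) * (x j * lam j k) := Finset.sum_comm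
    _ = ∑ k, (∑ i, x i * lam i k) ^ 2 := by
        refine Finset.sum_congr rfl fun k _ => ?_
        rw [sq, Finset.sum_mul_sum]

lemma gram_hermitian : (gramM lam).IsHermitian := by
  ext i j
  simp only [Matrix.conjTranspose_apply, gramM, Matrix.of_apply, star_trivial]
  exact Finset.sum_congr rfl fun k _ => mul_comm _ _

lemma gram_posdef (hli : LinearIndependent ℝ lam) : (gramM lam).PosDef := by
  refine Matrix.PosDef.of_dotProduct_mulVec_pos (gram_hermitian lam) fun x hx => ?_
  have hstar : star x = x := by
    funext i; simp
  rw [hstar, quad_eq]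
  have h0 : ∃ k, (∑ i, x i * lam i k) ≠ 0 := by
    by_contra h
    push_neg at h
    have : ∑ i, x i • lam i = 0 := by
      funext k
      simpa [Finset.sum_apply] using h k
    have := Fintype.linearIndependent_iff.1 hli x this
    exact hx (funext this)
  obtain ⟨k, hk⟩ := h0
  have : (0:ℝ) < ∑ k, (∑ i, x i * lam i k) ^ 2 :=
    Finset.sum_pos' (fun k _ => sq_nonneg _) ⟨k, Finset.mem_univ k, by positivity⟩
  exact this

noncomputable def sqrtG (hli : LinearIndependent ℝ lam) : Matrix (Fin m) (Fin m) ℝ := CFC.sqrt (gramM lam)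

lemma sqrtG_mul_self (hli : LinearIndependent ℝ lam) : (sqrtG lam hli) * (sqrtG lam hli) = gramM lam :=
  CFC.sqrt_mul_sqrt_self _ (gram_posdef lam hli).posSemidef.nonneg

lemma sqrtG_transpose (hli : LinearIndependent ℝ lam) : (sqrtG lam hli)ᵀ = sqrtG lam hli := by
  have h := (CFC.sqrt_nonneg (gramM lam)).posSemidef.isHermitian
  ext i j
  have := congrFun (congrFun h i) j
  simpa [Matrix.conjTranspose_apply, sqrtG] using this

lemma sq_sum_mulVec (hli : LinearIndependent ℝ lam) (x : Fin m → ℝ) :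
    ∑ j, ((sqrtG lam hli).mulVec x j) ^ 2 = x ⬝ᵥ ((gramM lam).mulVec x) := by
  set S := sqrtG lam hli with hS
  have h1 : ∑ j, (S.mulVec x j) ^ 2 = (S.mulVec x) ⬝ᵥ (S.mulVec x) := by
    simp [dotProduct, sq]
  rw [h1, Matrix.dotProduct_mulVec, ← Matrix.mulVec_transpose, sqrtG_transpose,
    Matrix.mulVec_mulVec, sqrtG_mul_self, dotProduct_comm]

lemma vnormR_comb_eq (hli : LinearIndependent ℝ lam) (x : Fin m → ℝ) :
    vnormR (∑ i, x i • lam i) = vnormR ((sqrtG lam hli).mulVec x) := by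
  unfold vnormR
  congr 1
  rw [sq_sum_mulVec lam hli, quad_eq]
  refine Finset.sum_congr rfl fun k _ => ?_
  congr 1
  simp [Finset.sum_apply]

lemma vnormR_sqrtG_col (hli : LinearIndependent ℝ lam) (i : Fin m) :
    vnormR (fun j => (sqrtG lam hli) j i) = vnormR (lam i) := by
  have h1 : (fun j => (sqrtG lam hli) j i) = (sqrtG lam hli).mulVec (Pi.single i 1) := by
    funext j
    simp [Matrix.mulVec_single]
  have h2 : ∑ l, (Pi.single i 1 : Fin m → ℝ) l • lam l = lam i := by
    rw [Finset.sum_eq_single i] <;> simp +contextual [Pi.single_apply]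
  rw [h1, ← vnormR_comb_eq lam hli, h2]

lemma det_sqrtG_sq (hli : LinearIndependent ℝ lam) : (sqrtG lam hli).det ^ 2 = gramDetR lam := by
  have : gramDetR lam = (gramM lam).det := rfl
  rw [this, ← sqrtG_mul_self lam hli, Matrix.det_mul, sq]

lemma sqrt_gramDetR_eq (hli : LinearIndependent ℝ lam) : Real.sqrt (gramDetR lam) = |(sqrtG lam hli).det| := by
  rw [← det_sqrtG_sq lam hli, Real.sqrt_sq_eq_abs]

lemma sqrtG_det_ne (hli : LinearIndependent ℝ lam) : (sqrtG lam hli).det ≠ 0 := by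
  intro h
  have h2 := det_sqrtG_sq lam hli
  rw [h] at h2
  have : gramDetR lam = (gramM lam).det := rfl
  have h3 := (gram_posdef lam hli).det_pos
  rw [← this] at h3
  simp at h2
  rw [← h2] at h3
  exact lt_irrefl _ h3

lemma sqrt_gramDetR_pos (hli : LinearIndependent ℝ lam) : 0 < Real.sqrt (gramDetR lam) := by
  rw [sqrt_gramDetR_eq lam hli]
  exact abs_pos.2 (sqrtG_det_ne lam hli)

end Gram

section Bridge

variable {n m : ℕ} (lam : Fin m → (Fin n → ℝ))

lemma comb_inj (hli : LinearIndependent ℝ lam) :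
    Function.Injective (fun a : Fin m → ℤ => ∑ i, (a i : ℝ) • lam i) := by
  intro a b hab
  simp only at hab
  have h0 : ∑ i, ((a i : ℝ) - (b i : ℝ)) • lam i = 0 := by
    simp only [sub_smul, Finset.sum_sub_distrib, hab, sub_self]
  have := Fintype.linearIndependent_iff.1 hli _ h0
  funext i
  have hi := this i
  exact_mod_cast sub_eq_zero.1 hi

lemma latSet_eq (hli : LinearIndependent ℝ lam) (T : ℝ) :
    {v : Fin n → ℝ | v ∈ Submodule.span ℤ (Set.range lam) ∧ vnormR v ≤ T} =
      (fun a : Fin m → ℤ => ∑ i, (a i : ℝ) • lam i) '' (latPts m (sqrtG lam hli) T) := by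
  ext v
  constructor
  · rintro ⟨hv, hnorm⟩
    obtain ⟨c, hc⟩ := (Submodule.mem_span_range_iff_exists_fun ℤ).1 hv
    have hceq : ∑ i, (c i : ℝ) • lam i = v := by
      rw [← hc]
      exact Finset.sum_congr rfl fun i _ => Int.cast_smul_eq_zsmul ℝ (c i) (lam i)
    refine ⟨c, ?_, hceq⟩
    simp only [latPts, Set.mem_setOf_eq]
    rw [← vnormR_comb_eq lam hli, hceq]
    exact hnorm
  · rintro ⟨a, ha, rfl⟩
    constructor
    · refine Submodule.sum_mem _ fun i _ => ?_
      rw [Int.cast_smul_eq_zsmul ℝ (a i) (lam i)]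
      exact zsmul_mem (Submodule.subset_span (Set.mem_range_self i)) _
    · rw [vnormR_comb_eq lam hli]
      exact ha

lemma latSet_ncard (hli : LinearIndependent ℝ lam) (T : ℝ) :
    {v : Fin n → ℝ | v ∈ Submodule.span ℤ (Set.range lam) ∧ vnormR v ≤ T}.ncard =
      (latPts m (sqrtG lam hli) T).ncard := by
  rw [latSet_eq lam hli T, Set.ncard_image_of_injective _ (comb_inj lam hli)]

lemma latSet_finite (hli : LinearIndependent ℝ lam) {T : ℝ} (hT : 0 ≤ T) :
    {v : Fin n → ℝ | v ∈ Submodule.span ℤ (Set.range lam) ∧ vnormR v ≤ T}.Finite := by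
  rw [latSet_eq lam hli T]
  exact (core_finite _ (sqrtG_det_ne lam hli) hT).image _

lemma latSet_upper (hli : LinearIndependent ℝ lam) {T : ℝ} (hT : 0 ≤ T) :
    ({v : Fin n → ℝ | v ∈ Submodule.span ℤ (Set.range lam) ∧ vnormR v ≤ T}.ncard : ℝ) *
        Real.sqrt (gramDetR lam) ≤ unitBallVol m * (T + ∑ i, vnormR (lam i)) ^ m := by
  rw [latSet_ncard lam hli T, sqrt_gramDetR_eq lam hli]
  have h := core_upper (sqrtG lam hli) (sqrtG_det_ne lam hli) hT
  have hc : ∀ i, vnormR (fun j => (sqrtG lam hli) j i) = vnormR (lam i) :=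
    vnormR_sqrtG_col lam hli
  simp only [hc] at h
  exact h

lemma latSet_lower (hli : LinearIndependent ℝ lam) {T : ℝ} (hT : 0 ≤ T)
    (hDT : ∑ i, vnormR (lam i) ≤ T) :
    unitBallVol m * (T - ∑ i, vnormR (lam i)) ^ m ≤
      ({v : Fin n → ℝ | v ∈ Submodule.span ℤ (Set.range lam) ∧ vnormR v ≤ T}.ncard : ℝ) *
        Real.sqrt (gramDetR lam) := by
  rw [latSet_ncard lam hli T, sqrt_gramDetR_eq lam hli]
  have hc : ∀ i, vnormR (fun j => (sqrtG lam hli) j i) = vnormR (lam i) :=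
    vnormR_sqrtG_col lam hli
  have h := core_lower (sqrtG lam hli) (sqrtG_det_ne lam hli) hT (by simp only [hc]; exact hDT)
  simp only [hc] at h
  exact h

end Bridge

/-- weak Hadamard-type inequality via lattice point counting: the covolume is bounded by
a constant times the product of norms of any linearly independent family in the lattice. -/
lemma covol_le {n m : ℕ} (hm : 1 ≤ m) (lam : Fin m → (Fin n → ℝ))
    (hli : LinearIndependent ℝ lam) (u : Fin m → (Fin n → ℝ))
    (hu : LinearIndependent ℝ u) (humem : ∀ i, u i ∈ Submodule.span ℤ (Set.range lam)) :
    Real.sqrt (gramDetR lam) ≤ unitBallVol m * (2 * m) ^ m * ∏ i, vnormR (u i) := by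
  have hu0 : ∀ i, 0 < vnormR (u i) := fun i => by
    have h1 : u i ≠ 0 := hu.ne_zero i
    have h2 : vnormR (u i) ≠ 0 := fun h => h1 (vnormR_eq_zero.1 h)
    exact lt_of_le_of_ne (vnormR_nonneg _) (Ne.symm h2)
  set D := ∑ i, vnormR (lam i) with hD
  have hD0 : 0 ≤ D := Finset.sum_nonneg fun i _ => vnormR_nonneg _
  set R := max D 1 with hR
  have hR1 : (1:ℝ) ≤ R := le_max_right _ _
  have hR0 : (0:ℝ) < R := lt_of_lt_of_le one_pos hR1
  have hDR : D ≤ R := le_max_left _ _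
  have hm1 : (1:ℝ) ≤ (m:ℝ) := by exact_mod_cast hm
  set M : Fin m → ℕ := fun i => ⌊R / vnormR (u i)⌋₊ with hM
  set F : (∀ i, Fin (M i + 1)) → (Fin n → ℝ) := fun c => ∑ i, ((c i : ℕ) : ℝ) • u i with hF
  have hFinj : Function.Injective F := by
    intro c c' hcc
    have h0 : ∑ i, (((c i : ℕ) : ℝ) - ((c' i : ℕ) : ℝ)) • u i = 0 := by
      simp only [sub_smul, Finset.sum_sub_distrib]
      rw [show (∑ i, ((c i : ℕ) : ℝ) • u i) = F c from rfl, hcc]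
      simp [hF]
    have := Fintype.linearIndependent_iff.1 hu _ h0
    funext i
    have hi := this i
    have : ((c i : ℕ) : ℝ) = ((c' i : ℕ) : ℝ) := by linarith [sub_eq_zero.1 hi]
    exact Fin.ext (by exact_mod_cast this)
  set V := {v : Fin n → ℝ | v ∈ Submodule.span ℤ (Set.range lam) ∧ vnormR v ≤ (m : ℝ) * R}
    with hV
  have hmR0 : (0:ℝ) ≤ (m:ℝ) * R := by positivity
  have hVfin : V.Finite := latSet_finite lam hli hmR0
  have hMle : ∀ i, (M i : ℝ) * vnormR (u i) ≤ R := by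
    intro i
    have h1 : (M i : ℝ) ≤ R / vnormR (u i) := Nat.floor_le (div_nonneg hR0.le (vnormR_nonneg _))
    rw [div_eq_mul_inv] at h1
    calc (M i : ℝ) * vnormR (u i) ≤ R * (vnormR (u i))⁻¹ * vnormR (u i) :=
          mul_le_mul_of_nonneg_right h1 (vnormR_nonneg _)
      _ = R := by rw [mul_assoc, inv_mul_cancel₀ (hu0 i).ne', mul_one]
  have hrange : ∀ c, F c ∈ V := by
    intro c
    constructor
    · refine Submodule.sum_mem _ fun i _ => ?_
      have : (((c i : ℕ) : ℝ)) = (((c i : ℕ) : ℤ) : ℝ) := by push_cast; ring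
      rw [this, Int.cast_smul_eq_zsmul]
      exact zsmul_mem (humem i) _
    · refine le_trans (vnormR_sum_le _ _) ?_
      have h1 : ∀ i : Fin m, vnormR (((c i : ℕ) : ℝ) • u i) ≤ R := by
        intro i
        rw [vnormR_smul, abs_of_nonneg (by positivity)]
        calc ((c i : ℕ) : ℝ) * vnormR (u i) ≤ (M i : ℝ) * vnormR (u i) := by
              have : ((c i : ℕ) : ℝ) ≤ (M i : ℝ) := by
                exact_mod_cast Nat.lt_succ_iff.1 (c i).isLt
              exact mul_le_mul_of_nonneg_right this (vnormR_nonneg _)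
          _ ≤ R := hMle i
      calc ∑ i, vnormR (((c i : ℕ) : ℝ) • u i) ≤ ∑ _i : Fin m, R :=
            Finset.sum_le_sum fun i _ => h1 i
        _ = (m : ℝ) * R := by simp [mul_comm]
  -- cardinality comparison
  have hcard : (∏ i, ((M i : ℝ) + 1)) ≤ (V.ncard : ℝ) := by
    have h1 : (Finset.univ.image F).card = ∏ i, (M i + 1) := by
      rw [Finset.card_image_of_injective _ hFinj, Finset.card_univ, Fintype.card_pi]
      simp
    have h2 : Finset.univ.image F ⊆ hVfin.toFinset := by
      intro x hx
      simp only [Finset.mem_image] at hx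
      obtain ⟨c, _, rfl⟩ := hx
      simpa using hrange c
    have h3 := Finset.card_le_card h2
    rw [h1] at h3
    rw [Set.ncard_eq_toFinset_card V hVfin]
    calc (∏ i, ((M i : ℝ) + 1)) = ((∏ i, (M i + 1) : ℕ) : ℝ) := by push_cast; ring
      _ ≤ _ := by exact_mod_cast h3
  -- lower bound for the product
  have hRle : R ^ m ≤ (∏ i, ((M i : ℝ) + 1)) * ∏ i, vnormR (u i) := by
    have h1 : ∀ i : Fin m, R ≤ ((M i : ℝ) + 1) * vnormR (u i) := by
      intro i
      have h2 : R / vnormR (u i) < (M i : ℝ) + 1 := Nat.lt_floor_add_one _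
      have h3 := mul_le_mul_of_nonneg_right h2.le (vnormR_nonneg (u i))
      rwa [div_mul_cancel₀ _ (hu0 i).ne'] at h3
    calc R ^ m = ∏ _i : Fin m, R := by simp
      _ ≤ ∏ i, ((M i : ℝ) + 1) * vnormR (u i) :=
          Finset.prod_le_prod (fun i _ => hR0.le) fun i _ => h1 i
      _ = (∏ i, ((M i : ℝ) + 1)) * ∏ i, vnormR (u i) := Finset.prod_mul_distrib
  -- upper volume bound
  have hupper := latSet_upper lam hli hmR0
  have hsum : ((m : ℝ) * R + D) ^ m ≤ (2 * m) ^ m * R ^ m := by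
    rw [← mul_pow]
    refine pow_le_pow_left₀ (by positivity) ?_ m
    nlinarith
  have hs := sqrt_gramDetR_pos lam hli
  set s := Real.sqrt (gramDetR lam)
  set N : ℝ := ({v : Fin n → ℝ | v ∈ Submodule.span ℤ (Set.range lam) ∧
    vnormR v ≤ (m : ℝ) * R}.ncard : ℝ) with hN
  have hub : N * s ≤ unitBallVol m * ((2 * m) ^ m * R ^ m) :=
    le_trans hupper (mul_le_mul_of_nonneg_left hsum (unitBallVol_pos m).le)
  -- combine
  set A := ∏ i, vnormR (u i) with hA
  have hA0 : 0 < A := Finset.prod_pos fun i _ => hu0 i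
  have hcardN : (∏ i, ((M i : ℝ) + 1)) ≤ N := hcard
  have hkey : R ^ m * s ≤ unitBallVol m * (2 * m) ^ m * R ^ m * A := by
    calc R ^ m * s ≤ ((∏ i, ((M i : ℝ) + 1)) * A) * s :=
          mul_le_mul_of_nonneg_right hRle hs.le
      _ = ((∏ i, ((M i : ℝ) + 1)) * s) * A := by ring
      _ ≤ (N * s) * A := by
          have := mul_le_mul_of_nonneg_right hcardN hs.le
          exact mul_le_mul_of_nonneg_right this hA0.le
      _ ≤ (unitBallVol m * ((2 * m) ^ m * R ^ m)) * A :=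
          mul_le_mul_of_nonneg_right hub hA0.le
      _ = unitBallVol m * (2 * m) ^ m * R ^ m * A := by ring
  have hRm : (0:ℝ) < R ^ m := pow_pos hR0 m
  nlinarith [hkey, hRm]

lemma pow_sub_pow_le' {a b : ℝ} (hb : 0 ≤ b) (hba : b ≤ a) (k : ℕ) :
    a ^ (k + 1) - b ^ (k + 1) ≤ ((k : ℝ) + 1) * a ^ k * (a - b) := by
  induction k with
  | zero => simp
  | succ k ih =>
    have ha : 0 ≤ a := hb.trans hba
    have hpow : b ^ (k + 1) ≤ a ^ (k + 1) := pow_le_pow_left₀ hb hba (k + 1)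
    have h1 : a * (a ^ (k + 1) - b ^ (k + 1)) ≤ a * (((k : ℝ) + 1) * a ^ k * (a - b)) :=
      mul_le_mul_of_nonneg_left ih ha
    have h2 : (a - b) * b ^ (k + 1) ≤ (a - b) * a ^ (k + 1) :=
      mul_le_mul_of_nonneg_left hpow (by linarith)
    have hexp : a ^ (k + 1 + 1) - b ^ (k + 1 + 1) =
        a * (a ^ (k + 1) - b ^ (k + 1)) + (a - b) * b ^ (k + 1) := by ring
    have hring : a * (((k : ℝ) + 1) * a ^ k * (a - b)) + (a - b) * a ^ (k + 1) =
        ((k : ℝ) + 1 + 1) * a ^ (k + 1) * (a - b) := by ring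
    push_cast
    linarith

lemma cancel_le {P L x : ℝ} (hP : 0 < P) (h : P * L ≤ x * P) : L ≤ x := by nlinarith

lemma final_arith (m' : ℕ) {C v mR T L P s Dv N c₁ : ℝ}
    (hC : 0 < C) (hv : 0 < v) (hmRval : mR = (m' : ℝ) + 1) (hT : 0 < T) (hP : 0 < P)
    (hs : 0 < s) (hN0 : 0 ≤ N) (hDv0 : 0 ≤ Dv) (hDvL : Dv ≤ mR * L)
    (h_red : P * L ≤ C * s) (hc₁0 : 0 ≤ c₁) (hL_le : L ≤ c₁ * T)
    (hupper : N * s ≤ v * (T + Dv) ^ (m' + 1))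
    (hlower : Dv ≤ T → v * (T - Dv) ^ (m' + 1) ≤ N * s) :
    |N - v * T ^ (m' + 1) / s| ≤
      2 * v * mR ^ 2 * C * (1 + mR * c₁) ^ m' * T ^ m' / P := by
  have hmR1 : (1:ℝ) ≤ mR := by rw [hmRval]; simp
  have hmR0 : (0:ℝ) < mR := lt_of_lt_of_le one_pos hmR1
  set c₂ : ℝ := mR * c₁ with hc₂_def
  have hc₂0 : 0 ≤ c₂ := by positivity
  have hDvT : Dv ≤ c₂ * T := by
    calc Dv ≤ mR * L := hDvL
      _ ≤ mR * (c₁ * T) := mul_le_mul_of_nonneg_left hL_le hmR0.le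
      _ = c₂ * T := by rw [hc₂_def]; ring
  have hTDv : T ≤ T + Dv := by linarith
  have hpow_up : (T + Dv) ^ (m' + 1) - T ^ (m' + 1) ≤ mR * (T + Dv) ^ m' * Dv := by
    have h0 := pow_sub_pow_le' hT.le hTDv m'
    have hsub : T + Dv - T = Dv := by ring
    rw [hsub, ← hmRval] at h0
    linarith
  have hcentral_up : N * s - v * T ^ (m' + 1) ≤ v * (mR * (T + Dv) ^ m' * Dv) := by
    have h0 := mul_le_mul_of_nonneg_left hpow_up hv.le
    linarith
  have hTpow_le : T ^ m' ≤ (T + Dv) ^ m' := pow_le_pow_left₀ hT.le hTDv m'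
  have hcentral_low : v * T ^ (m' + 1) - N * s ≤ v * (mR * (T + Dv) ^ m' * Dv) := by
    by_cases hc : Dv ≤ T
    · have hlow := hlower hc
      have h1 : T ^ (m' + 1) - (T - Dv) ^ (m' + 1) ≤ mR * T ^ m' * Dv := by
        have h0 := pow_sub_pow_le' (by linarith : (0:ℝ) ≤ T - Dv) (by linarith : T - Dv ≤ T) m'
        have hsub : T - (T - Dv) = Dv := by ring
        rw [hsub, ← hmRval] at h0
        linarith
      have h2 : mR * T ^ m' * Dv ≤ mR * (T + Dv) ^ m' * Dv :=
        mul_le_mul_of_nonneg_right (mul_le_mul_of_nonneg_left hTpow_le hmR0.le) hDv0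
      have h3 := mul_le_mul_of_nonneg_left (h1.trans h2) hv.le
      linarith
    · push_neg at hc
      have h1 : T ^ (m' + 1) ≤ T ^ m' * Dv := by
        rw [pow_succ]
        exact mul_le_mul_of_nonneg_left hc.le (pow_nonneg hT.le m')
      have h2 : T ^ m' * Dv ≤ mR * (T + Dv) ^ m' * Dv := by
        have h2a := mul_le_mul_of_nonneg_right hTpow_le hDv0
        have h2b : (T + Dv) ^ m' * Dv ≤ mR * ((T + Dv) ^ m' * Dv) :=
          le_mul_of_one_le_left (by positivity) hmR1
        have h2c : mR * ((T + Dv) ^ m' * Dv) = mR * (T + Dv) ^ m' * Dv := by ring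
        linarith
      have h3 := mul_le_mul_of_nonneg_left (h1.trans h2) hv.le
      linarith [mul_nonneg hN0 hs.le]
  have hcentral : |N * s - v * T ^ (m' + 1)| ≤ v * (mR * (T + Dv) ^ m' * Dv) :=
    abs_le.2 ⟨by linarith, by linarith⟩
  have hrw : N - v * T ^ (m' + 1) / s = (N * s - v * T ^ (m' + 1)) / s := by
    field_simp
  rw [hrw, abs_div, abs_of_pos hs, div_le_div_iff₀ hs hP]
  have hTD2 : T + Dv ≤ (1 + c₂) * T := by linarith
  have hpowTD : (T + Dv) ^ m' ≤ (1 + c₂) ^ m' * T ^ m' := by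
    calc (T + Dv) ^ m' ≤ ((1 + c₂) * T) ^ m' := pow_le_pow_left₀ (by linarith) hTD2 m'
      _ = (1 + c₂) ^ m' * T ^ m' := mul_pow _ _ _
  have hDvP : Dv * P ≤ mR * C * s := by
    calc Dv * P ≤ (mR * L) * P := mul_le_mul_of_nonneg_right hDvL hP.le
      _ = mR * (L * P) := by ring
      _ ≤ mR * (C * s) := by
          have h0 : L * P ≤ C * s := by rw [mul_comm]; exact h_red
          exact mul_le_mul_of_nonneg_left h0 hmR0.le
      _ = mR * C * s := by ring
  calc |N * s - v * T ^ (m' + 1)| * P ≤ (v * (mR * (T + Dv) ^ m' * Dv)) * P :=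
        mul_le_mul_of_nonneg_right hcentral hP.le
    _ = (v * mR) * ((T + Dv) ^ m' * (Dv * P)) := by ring
    _ ≤ (v * mR) * (((1 + c₂) ^ m' * T ^ m') * (mR * C * s)) := by
        refine mul_le_mul_of_nonneg_left ?_ (by positivity)
        refine mul_le_mul hpowTD hDvP (by positivity) (by positivity)
    _ = (v * mR ^ 2 * C * (1 + c₂) ^ m') * T ^ m' * s := by ring
    _ ≤ 2 * v * mR ^ 2 * C * (1 + mR * c₁) ^ m' * T ^ m' * s := by
        have hX : 0 ≤ v * mR ^ 2 * C * (1 + c₂) ^ m' * T ^ m' * s := by positivity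
        rw [← hc₂_def]
        linarith

lemma filter_prod_castSucc {m' : ℕ} (f : Fin (m' + 1) → ℝ) (hf : f (Fin.last m') ≠ 0) :
    ∏ i ∈ Finset.univ.filter (fun i : Fin (m' + 1) => (i : ℕ) < m'), f i =
      ∏ i : Fin m', f i.castSucc := by
  have hcompl : Finset.univ.filter (fun i : Fin (m' + 1) => ¬ (i : ℕ) < m') = {Fin.last m'} := by
    ext i
    simp only [Finset.mem_filter, Finset.mem_univ, true_and, Finset.mem_singleton, Fin.ext_iff,
      Fin.val_last]
    have := i.isLt
    omega
  have h1 : ∏ i : Fin (m' + 1), f i =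
      (∏ i ∈ Finset.univ.filter (fun i : Fin (m' + 1) => (i : ℕ) < m'), f i) * f (Fin.last m') := by
    rw [← Finset.prod_filter_mul_prod_filter_not Finset.univ (fun i : Fin (m' + 1) =>
      (i : ℕ) < m') f, hcompl, Finset.prod_singleton]
  have h2 := Fin.prod_univ_castSucc f
  exact mul_right_cancel₀ hf (h1.symm.trans h2)


set_option maxHeartbeats 1000000 in
/-- counting points of a rank-m lattice in `ℝ^n`, spanned by an almost-reduced
basis `λ₁,…,λ_m` (sorted by norm, with `∏|λᵢ| ≤ C·det Λ`), in a ball of radius `T`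
containing m linearly independent lattice vectors:
`#{v ∈ Λ : |v| ≤ T} = v_m·T^m/det(Λ) + O(T^{m−1}/(|λ₁|⋯|λ_{m−1}|))`,
the implied constant depending only on `m` and `C`. -/
theorem lattice_ball_count (m : ℕ) (hm : 1 ≤ m) (C : ℝ) (hC : 0 < C) :
    ∃ K : ℝ, 0 < K ∧ ∀ (n : ℕ) (lam : Fin m → (Fin n → ℝ)) (T : ℝ),
      LinearIndependent ℝ lam →
      (∀ i j : Fin m, i ≤ j → vnormR (lam i) ≤ vnormR (lam j)) →
      (∏ i, vnormR (lam i)) ≤ C * Real.sqrt (gramDetR lam) →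
      (∃ w : Fin m → (Fin n → ℝ), LinearIndependent ℝ w ∧
        ∀ i, w i ∈ Submodule.span ℤ (Set.range lam) ∧ vnormR (w i) ≤ T) →
      |(Set.ncard {v : Fin n → ℝ | v ∈ Submodule.span ℤ (Set.range lam) ∧ vnormR v ≤ T} : ℝ) -
          unitBallVol m * T ^ m / Real.sqrt (gramDetR lam)| ≤
        K * T ^ (m - 1) /
          ∏ i ∈ Finset.univ.filter (fun i : Fin m => (i : ℕ) < m - 1), vnormR (lam i) := by
  obtain ⟨m', rfl⟩ : ∃ m', m = m' + 1 := ⟨m - 1, (Nat.succ_pred_eq_of_pos hm).symm⟩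
  have hv : 0 < unitBallVol (m' + 1) := unitBallVol_pos _
  refine ⟨2 * unitBallVol (m' + 1) * ((m' : ℝ) + 1) ^ 2 * C *
    (1 + ((m' : ℝ) + 1) * (C * (unitBallVol (m' + 1) * (2 * ((m' : ℝ) + 1)) ^ (m' + 1)))) ^ m',
    by positivity, ?_⟩
  intro n lam T hli hsort hred hw
  obtain ⟨w, hwli, hwprop⟩ := hw
  simp only [Nat.add_sub_cancel]
  have hT : 0 < T := by
    have h1 : w 0 ≠ 0 := hwli.ne_zero 0
    have h2 : vnormR (w 0) ≠ 0 := fun h => h1 (vnormR_eq_zero.1 h)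
    have h3 : 0 < vnormR (w 0) := lt_of_le_of_ne (vnormR_nonneg _) (Ne.symm h2)
    exact lt_of_lt_of_le h3 (hwprop 0).2
  have hlam0 : ∀ i, 0 < vnormR (lam i) := fun i => by
    have h1 : lam i ≠ 0 := hli.ne_zero i
    exact lt_of_le_of_ne (vnormR_nonneg _) (Ne.symm (fun h => h1 (vnormR_eq_zero.1 h)))
  have hL : 0 < vnormR (lam (Fin.last m')) := hlam0 _
  have hPQ : (∏ i ∈ Finset.univ.filter (fun i : Fin (m' + 1) => (i : ℕ) < m'), vnormR (lam i)) =
      ∏ i : Fin m', vnormR (lam i.castSucc) :=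
    filter_prod_castSucc (fun i => vnormR (lam i)) hL.ne'
  have hP : 0 < ∏ i ∈ Finset.univ.filter (fun i : Fin (m' + 1) => (i : ℕ) < m'),
      vnormR (lam i) := by
    rw [hPQ]; exact Finset.prod_pos fun i _ => hlam0 _
  have hprodall : ∏ i : Fin (m' + 1), vnormR (lam i) =
      (∏ i ∈ Finset.univ.filter (fun i : Fin (m' + 1) => (i : ℕ) < m'), vnormR (lam i)) *
        vnormR (lam (Fin.last m')) := by
    rw [Fin.prod_univ_castSucc (fun i => vnormR (lam i)), hPQ]
  have hs : 0 < Real.sqrt (gramDetR lam) := sqrt_gramDetR_pos lam hli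
  have h_red : (∏ i ∈ Finset.univ.filter (fun i : Fin (m' + 1) => (i : ℕ) < m'),
      vnormR (lam i)) * vnormR (lam (Fin.last m')) ≤ C * Real.sqrt (gramDetR lam) := by
    rw [← hprodall]; exact hred
  -- find w j outside the span of the first m' basis vectors
  have hex : ∃ j, w j ∉ Submodule.span ℝ (Set.range fun i : Fin m' => lam i.castSucc) := by
    by_contra h
    push_neg at h
    have h1 : Submodule.span ℝ (Set.range w) ≤
        Submodule.span ℝ (Set.range fun i : Fin m' => lam i.castSucc) :=
      Submodule.span_le.2 (by rintro _ ⟨j, rfl⟩; exact h j)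
    have h2 : Module.finrank ℝ (Submodule.span ℝ (Set.range w)) = m' + 1 := by
      rw [finrank_span_eq_card hwli]; simp
    have h3 : Module.finrank ℝ
        (Submodule.span ℝ (Set.range fun i : Fin m' => lam i.castSucc)) ≤ m' := by
      have := finrank_range_le_card (R := ℝ) (fun i : Fin m' => lam i.castSucc)
      simpa [Set.finrank] using this
    have h4 := Submodule.finrank_mono h1
    omega
  obtain ⟨j, hj⟩ := hex
  have hui : LinearIndependent ℝ (Fin.snoc (fun i : Fin m' => lam i.castSucc) (w j) :
      Fin (m' + 1) → (Fin n → ℝ)) := by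
    rw [linearIndependent_fin_snoc]
    exact ⟨hli.comp Fin.castSucc (Fin.castSucc_injective m'), hj⟩
  have humem : ∀ i, (Fin.snoc (fun i : Fin m' => lam i.castSucc) (w j) :
      Fin (m' + 1) → (Fin n → ℝ)) i ∈ Submodule.span ℤ (Set.range lam) := by
    refine Fin.lastCases ?_ ?_
    · simp only [Fin.snoc_last]
      exact (hwprop j).1
    · intro i
      simp only [Fin.snoc_castSucc]
      exact Submodule.subset_span (Set.mem_range_self _)
  have hured : (∏ i, vnormR ((Fin.snoc (fun i : Fin m' => lam i.castSucc) (w j) :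
      Fin (m' + 1) → (Fin n → ℝ)) i)) ≤
      (∏ i ∈ Finset.univ.filter (fun i : Fin (m' + 1) => (i : ℕ) < m'), vnormR (lam i)) * T := by
    rw [Fin.prod_univ_castSucc (fun i => vnormR ((Fin.snoc (fun i : Fin m' => lam i.castSucc)
      (w j) : Fin (m' + 1) → (Fin n → ℝ)) i))]
    simp only [Fin.snoc_castSucc, Fin.snoc_last]
    rw [← hPQ]
    exact mul_le_mul_of_nonneg_left (hwprop j).2 hP.le
  have hadam := covol_le (Nat.le_add_left 1 m') lam hli _ hui humem
  push_cast at hadam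
  have hh1 : Real.sqrt (gramDetR lam) ≤ unitBallVol (m' + 1) * (2 * ((m' : ℝ) + 1)) ^ (m' + 1) *
      ((∏ i ∈ Finset.univ.filter (fun i : Fin (m' + 1) => (i : ℕ) < m'), vnormR (lam i)) * T) :=
    le_trans hadam (mul_le_mul_of_nonneg_left hured (by positivity))
  have hh2 : (∏ i ∈ Finset.univ.filter (fun i : Fin (m' + 1) => (i : ℕ) < m'), vnormR (lam i)) *
      vnormR (lam (Fin.last m')) ≤
      (C * (unitBallVol (m' + 1) * (2 * ((m' : ℝ) + 1)) ^ (m' + 1)) * T) *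
      ∏ i ∈ Finset.univ.filter (fun i : Fin (m' + 1) => (i : ℕ) < m'), vnormR (lam i) := by
    calc _ ≤ C * Real.sqrt (gramDetR lam) := h_red
      _ ≤ C * (unitBallVol (m' + 1) * (2 * ((m' : ℝ) + 1)) ^ (m' + 1) *
          ((∏ i ∈ Finset.univ.filter (fun i : Fin (m' + 1) => (i : ℕ) < m'), vnormR (lam i)) *
            T)) := mul_le_mul_of_nonneg_left hh1 hC.le
      _ = _ := by ring
  have hL_le : vnormR (lam (Fin.last m')) ≤
      C * (unitBallVol (m' + 1) * (2 * ((m' : ℝ) + 1)) ^ (m' + 1)) * T := cancel_le hP hh2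
  have hDvL : (∑ i, vnormR (lam i)) ≤ ((m' : ℝ) + 1) * vnormR (lam (Fin.last m')) := by
    calc (∑ i, vnormR (lam i)) ≤ ∑ _i : Fin (m' + 1), vnormR (lam (Fin.last m')) :=
          Finset.sum_le_sum fun i _ => hsort i (Fin.last m') (Fin.le_last i)
      _ = ((m' : ℝ) + 1) * vnormR (lam (Fin.last m')) := by
          rw [Finset.sum_const, Finset.card_univ, Fintype.card_fin, nsmul_eq_mul]
          push_cast; ring
  have hupper := latSet_upper lam hli hT.le
  have hlower : (∑ i, vnormR (lam i)) ≤ T → unitBallVol (m' + 1) *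
      (T - ∑ i, vnormR (lam i)) ^ (m' + 1) ≤
      (({v : Fin n → ℝ | v ∈ Submodule.span ℤ (Set.range lam) ∧ vnormR v ≤ T}.ncard : ℝ)) *
        Real.sqrt (gramDetR lam) := fun hc => latSet_lower lam hli hT.le hc
  exact final_arith m' hC hv rfl hT hP hs (Nat.cast_nonneg _)
    (Finset.sum_nonneg fun i _ => vnormR_nonneg _) hDvL h_red (by positivity)
    (by linarith [hL_le]) hupper hlower
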